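/- Fix an integer d ≥ 1 and T > 0. The set 𝕄_T, regarded as a subset of the space C([0,T], ℝ^d) of continuous ℝ^d-valued functions with the supremum metric via t ↦ (ν(t,1), …, ν(t,d)), is a compact subset of C([0,T], ℝ^d). -/

import Mathlib

open MeasureTheory

/-- A kernel on `[0,T] × {1,…,d}`: a Borel measurable function `K` with `K s i ≥ 0`
and `∑ i, K s i = 1` for every `s ∈ [0,T]`. -/
def IsMKernel (d : ℕ) (T : ℝ) (K : ℝ → Fin d → ℝ) : Prop :=
  (∀ i : Fin d, Measurable fun s => K s i) ∧
    ∀ s ∈ Set.Icc (0:ℝ) T, (∀ i : Fin d, 0 ≤ K s i) ∧ ∑ i : Fin d, K s i = 1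

/-- The space `𝕄_T` of occupation-measure paths, viewed as a subset of
`C([0,T], ℝ^d)` with the supremum metric. -/
def MT (d : ℕ) (T : ℝ) : Set C(Set.Icc (0:ℝ) T, Fin d → ℝ) :=
  {ν | ∃ K : ℝ → Fin d → ℝ, IsMKernel d T K ∧
    ∀ t : Set.Icc (0:ℝ) T, ∀ i : Fin d, ν t i = ∫ s in (0:ℝ)..(t:ℝ), K s i}

section helpers
variable {d : ℕ} {T : ℝ}

lemma kernel_intervalIntegrable {K : ℝ → Fin d → ℝ} (hK : IsMKernel d T K) (i : Fin d)
    {a b : ℝ} (h0 : 0 ≤ a) (hab : a ≤ b) (hbT : b ≤ T) :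
    IntervalIntegrable (fun s => K s i) volume a b := by
  rw [intervalIntegrable_iff_integrableOn_Ioc_of_le hab]
  refine ⟨((hK.1 i).aestronglyMeasurable).restrict, ?_⟩
  refine MeasureTheory.HasFiniteIntegral.of_bounded (C := 1) ?_
  rw [ae_restrict_iff' measurableSet_Ioc]
  refine Filter.Eventually.of_forall fun s hs => ?_
  have hsT : s ∈ Set.Icc (0:ℝ) T := ⟨h0.trans hs.1.le, hs.2.trans hbT⟩
  obtain ⟨hpos, hsum⟩ := hK.2 s hsT
  have hle : K s i ≤ 1 := by
    calc K s i ≤ ∑ j : Fin d, K s j := Finset.single_le_sum (fun j _ => hpos j) (Finset.mem_univ i)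
    _ = 1 := hsum
  rw [Real.norm_eq_abs, abs_of_nonneg (hpos i)]
  exact hle

lemma mem_MT_props {ν : C(Set.Icc (0:ℝ) T, Fin d → ℝ)} (hν : ν ∈ MT d T) :
    (∀ t i, 0 ≤ ν t i) ∧ (∀ i, Monotone fun t => ν t i) ∧ (∀ t, ∑ i, ν t i = (t:ℝ)) := by
  obtain ⟨K, hK, hint⟩ := hν
  have hnn : ∀ t : Set.Icc (0:ℝ) T, ∀ i, 0 ≤ ν t i := by
    intro t i
    rw [hint t i]
    refine intervalIntegral.integral_nonneg t.2.1 fun u hu => ?_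
    exact (hK.2 u ⟨hu.1, hu.2.trans t.2.2⟩).1 i
  refine ⟨hnn, ?_, ?_⟩
  · intro i s t hst
    have h1 := kernel_intervalIntegrable hK i (le_refl (0:ℝ)) s.2.1 s.2.2
    have hst' : (s:ℝ) ≤ (t:ℝ) := hst
    have h2 : IntervalIntegrable (fun u => K u i) volume (s:ℝ) (t:ℝ) :=
      kernel_intervalIntegrable hK i s.2.1 hst' t.2.2
    simp only
    rw [hint s i, hint t i, ← intervalIntegral.integral_add_adjacent_intervals h1 h2]
    have : (0:ℝ) ≤ ∫ u in (s:ℝ)..(t:ℝ), K u i :=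
      intervalIntegral.integral_nonneg hst' fun u hu =>
        (hK.2 u ⟨s.2.1.trans hu.1, hu.2.trans t.2.2⟩).1 i
    linarith
  · intro t
    simp only [hint]
    rw [← intervalIntegral.integral_finset_sum
      (fun i _ => kernel_intervalIntegrable hK i (le_refl _) t.2.1 t.2.2)]
    rw [intervalIntegral.integral_congr (g := fun _ => (1:ℝ))
      (fun u hu => by
        rw [Set.uIcc_of_le t.2.1] at hu
        exact (hK.2 u ⟨hu.1, hu.2.trans t.2.2⟩).2)]
    simp


lemma clamp_sub {T a b : ℝ} (hT : 0 ≤ T) (hab : a ≤ b) :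
    max 0 (min T b) - max 0 (min T a) = max 0 (min b T - max a 0) := by
  simp only [min_def, max_def]
  split_ifs <;> linarith

lemma rnDeriv_finset_sum {ι : Type*} (s : Finset ι) (μ : ι → Measure ℝ)
    [∀ i, IsFiniteMeasure (μ i)] :
    (∑ i ∈ s, μ i).rnDeriv volume =ᵐ[volume] fun x => ∑ i ∈ s, (μ i).rnDeriv volume x := by
  classical
  induction s using Finset.induction with
  | empty =>
      simp only [Finset.sum_empty]
      filter_upwards [Measure.rnDeriv_zero (volume : Measure ℝ)] with x hx
      simp [hx]
  | @insert a s ha ih =>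
      rw [Finset.sum_insert ha]
      filter_upwards [Measure.rnDeriv_add (μ a) (∑ i ∈ s, μ i) volume, ih] with x h1 h2
      simp [h1, h2, Finset.sum_insert ha]

lemma exists_kernel (hd : 1 ≤ d) (hT : 0 < T) (f : Set.Icc (0:ℝ) T → Fin d → ℝ)
    (hf : Continuous f) (h0 : ∀ t i, 0 ≤ f t i) (hm : ∀ i, Monotone fun t => f t i)
    (hs : ∀ t, ∑ i, f t i = (t:ℝ)) :
    ∃ K : ℝ → Fin d → ℝ, IsMKernel d T K ∧
      ∀ t : Set.Icc (0:ℝ) T, ∀ i, f t i = ∫ s in (0:ℝ)..(t:ℝ), K s i := by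
  classical
  set π : ℝ → Set.Icc (0:ℝ) T := Set.projIcc 0 T hT.le with hπ
  have hπc : Continuous π := continuous_projIcc
  have hπm : Monotone π := Set.monotone_projIcc _
  set g : Fin d → ℝ → ℝ := fun i s => f (π s) i with hg
  have hgc : ∀ i, Continuous (g i) := fun i => ((continuous_apply i).comp hf).comp hπc
  have hgm : ∀ i, Monotone (g i) := fun i => ((hm i).comp hπm : _)
  -- value at points ≤ 0 is 0
  have hf0 : ∀ t : Set.Icc (0:ℝ) T, (t:ℝ) = 0 → ∀ i, f t i = 0 := by
    intro t ht i
    have h1 : ∑ j, f t j = 0 := by rw [hs t, ht]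
    have h2 : f t i ≤ ∑ j, f t j :=
      Finset.single_le_sum (fun j _ => h0 t j) (Finset.mem_univ i)
    have := h0 t i
    linarith
  -- sum of g equals clamp
  have hgsum : ∀ s, ∑ i, g i s = max 0 (min T s) := by
    intro s
    rw [hg]
    simp only
    rw [hs (π s)]
    exact Set.coe_projIcc 0 T hT.le s
  -- Stieltjes functions and measures
  set F : Fin d → StieltjesFunction ℝ :=
    fun i => ⟨g i, hgm i, fun x => (hgc i).continuousAt.continuousWithinAt⟩ with hF
  set μ : Fin d → Measure ℝ := fun i => (F i).measure with hμ
  have hFapp : ∀ i s, F i s = g i s := fun i s => rfl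
  -- sum of measures is the restricted Lebesgue measure
  have key : ∀ x : ℝ, ENNReal.ofReal (max 0 x) = ENNReal.ofReal x := by
    intro x
    rcases le_total x 0 with h | h
    · rw [max_eq_left h, ENNReal.ofReal_eq_zero.mpr le_rfl, eq_comm,
        ENNReal.ofReal_eq_zero]
      exact h
    · rw [max_eq_right h]
  have hμsum : (∑ i, μ i) = volume.restrict (Set.Ioc 0 T) := by
    refine Measure.ext_of_Ioc' _ _ (fun a b hab => ?_) (fun a b hab => ?_)
    · rw [Measure.finset_sum_apply]
      have h1 : ∀ i : Fin d, μ i (Set.Ioc a b) = ENNReal.ofReal (g i b - g i a) := by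
        intro i; rw [hμ]; exact StieltjesFunction.measure_Ioc _ _ _
      simp only [h1]
      exact (ENNReal.sum_lt_top.mpr fun i _ => ENNReal.ofReal_lt_top).ne
    · rw [Measure.finset_sum_apply]
      have h1 : ∀ i : Fin d, μ i (Set.Ioc a b) = ENNReal.ofReal (g i b - g i a) := by
        intro i; rw [hμ]; exact StieltjesFunction.measure_Ioc _ _ _
      simp only [h1]
      rw [← ENNReal.ofReal_sum_of_nonneg (fun i _ => sub_nonneg.mpr (hgm i hab.le))]
      rw [Finset.sum_sub_distrib, hgsum, hgsum]
      rw [Measure.restrict_apply measurableSet_Ioc, Set.Ioc_inter_Ioc, Real.volume_Ioc]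
      have : (0:ℝ) ⊔ T ⊓ b - (0:ℝ) ⊔ T ⊓ a = max 0 (min T b) - max 0 (min T a) := rfl
      rw [this, clamp_sub hT.le hab.le, key]
  -- finiteness and absolute continuity
  have hle : ∀ i, μ i ≤ volume.restrict (Set.Ioc 0 T) := by
    intro i
    rw [← hμsum, Measure.le_iff]
    intro s hsm
    rw [Measure.finset_sum_apply]
    exact Finset.single_le_sum (f := fun j => μ j s) (fun j _ => zero_le)
      (Finset.mem_univ i)
  haveI hfinR : IsFiniteMeasure (volume.restrict (Set.Ioc (0:ℝ) T)) :=
    ⟨by rw [Measure.restrict_apply_univ]; exact measure_Ioc_lt_top⟩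
  haveI hfin : ∀ i, IsFiniteMeasure (μ i) := fun i => isFiniteMeasure_of_le _ (hle i)
  have hac : ∀ i, μ i ≪ volume :=
    fun i => Measure.absolutelyContinuous_of_le ((hle i).trans Measure.restrict_le_self)
  set K0 : Fin d → ℝ → ENNReal := fun i => (μ i).rnDeriv volume with hK0
  have hK0m : ∀ i, Measurable (K0 i) := fun i => Measure.measurable_rnDeriv _ _
  -- integral formula
  have hInt : ∀ t : Set.Icc (0:ℝ) T, ∀ i,
      ∫ s in Set.Ioc (0:ℝ) (t:ℝ), (K0 i s).toReal = f t i := by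
    intro t i
    rw [Measure.setIntegral_toReal_rnDeriv (hac i) (Set.Ioc (0:ℝ) (t:ℝ))]
    have : μ i (Set.Ioc (0:ℝ) (t:ℝ)) = ENNReal.ofReal (g i t - g i 0) :=
      StieltjesFunction.measure_Ioc _ _ _
    rw [measureReal_def, this]
    have hg0 : g i 0 = 0 := hf0 (π 0) (by
      rw [hπ]; rw [Set.projIcc_of_mem hT.le ⟨le_refl 0, hT.le⟩]) i
    have hgt : g i t = f t i := by
      rw [hg]; simp only; rw [hπ, Set.projIcc_of_mem hT.le t.2]
    rw [hg0, hgt, sub_zero, ENNReal.toReal_ofReal (h0 t i)]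
  -- a.e. the sum of densities is 1 on Ioc 0 T
  have hae : ∀ᵐ s ∂(volume : Measure ℝ), s ∈ Set.Ioc (0:ℝ) T →
      ∑ i, (K0 i s).toReal = 1 := by
    have h1 := rnDeriv_finset_sum (Finset.univ) μ
    rw [hμsum] at h1
    have h2 := Measure.rnDeriv_restrict_self (volume : Measure ℝ)
      (measurableSet_Ioc (a := (0:ℝ)) (b := T))
    have h3 : ∀ᵐ s ∂(volume : Measure ℝ), ∀ i, (μ i).rnDeriv volume s < ⊤ :=
      MeasureTheory.ae_all_iff.mpr fun i => Measure.rnDeriv_lt_top _ _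
    filter_upwards [h1, h2, h3] with s hs1 hs2 hs3 hmem
    rw [← ENNReal.toReal_sum (fun i _ => (hs3 i).ne), ← hs1, hs2]
    rw [Set.indicator_of_mem hmem]
    simp
  -- the kernel
  set K : ℝ → Fin d → ℝ := fun s i =>
    if ∑ j, (K0 j s).toReal = 1 then (K0 i s).toReal else (d:ℝ)⁻¹ with hKdef
  have hdne : (d:ℝ) ≠ 0 := Nat.cast_ne_zero.mpr (by omega)
  refine ⟨K, ⟨?_, ?_⟩, ?_⟩
  · intro i
    have hmeas : MeasurableSet {s : ℝ | ∑ j, (K0 j s).toReal = 1} := by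
      have : Measurable fun s => ∑ j, (K0 j s).toReal :=
        Finset.measurable_sum _ fun j _ => (hK0m j).ennreal_toReal
      exact this (measurableSet_singleton 1)
    exact Measurable.ite hmeas ((hK0m i).ennreal_toReal) measurable_const
  · intro s _
    constructor
    · intro i
      rw [hKdef]; simp only
      split_ifs
      · exact ENNReal.toReal_nonneg
      · positivity
    · rw [hKdef]; simp only
      split_ifs with h
      · exact h
      · rw [Finset.sum_const, Finset.card_univ, Fintype.card_fin, nsmul_eq_mul,
          mul_inv_cancel₀ hdne]
  · intro t i
    rw [intervalIntegral.integral_of_le t.2.1, ← hInt t i]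
    refine setIntegral_congr_ae measurableSet_Ioc ?_
    filter_upwards [hae] with s hsae hmem
    have hmem' : s ∈ Set.Ioc (0:ℝ) T := ⟨hmem.1, hmem.2.trans t.2.2⟩
    rw [hKdef]; simp only
    rw [if_pos (hsae hmem')]


lemma lip_of_props {f : Set.Icc (0:ℝ) T → Fin d → ℝ}
    (hm : ∀ i, Monotone fun t => f t i)
    (hs : ∀ t, ∑ i, f t i = (t:ℝ)) :
    ∀ (x y : Set.Icc (0:ℝ) T) (i : Fin d), |f x i - f y i| ≤ |(x:ℝ) - (y:ℝ)| := by
  have key : ∀ (x y : Set.Icc (0:ℝ) T), y ≤ x → ∀ i, |f x i - f y i| ≤ |(x:ℝ) - (y:ℝ)| := by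
    intro x y hyx i
    have h1 : 0 ≤ f x i - f y i := sub_nonneg.mpr (hm i hyx)
    have h2 : f x i - f y i ≤ (x:ℝ) - (y:ℝ) := by
      have hsum : ∑ j, (f x j - f y j) = (x:ℝ) - (y:ℝ) := by
        rw [Finset.sum_sub_distrib, hs x, hs y]
      calc f x i - f y i ≤ ∑ j, (f x j - f y j) :=
            Finset.single_le_sum (fun j _ => sub_nonneg.mpr (hm j hyx)) (Finset.mem_univ i)
        _ = (x:ℝ) - (y:ℝ) := hsum
    have hyx' : (y:ℝ) ≤ (x:ℝ) := hyx
    rw [abs_of_nonneg h1, abs_of_nonneg (by linarith : (0:ℝ) ≤ (x:ℝ) - (y:ℝ))]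
    exact h2
  intro x y i
  rcases le_total y x with h | h
  · exact key x y h i
  · rw [abs_sub_comm, abs_sub_comm (x:ℝ)]
    exact key y x h i

/-- `𝕄_T` is a compact subset of `C([0,T], ℝ^d)` with the supremum metric. -/
theorem MT_isCompact (d : ℕ) (hd : 1 ≤ d) (T : ℝ) (hT : 0 < T) :
    IsCompact (MT d T) := by
  have hchar : ∀ ν : C(Set.Icc (0:ℝ) T, Fin d → ℝ), ν ∈ MT d T ↔
      (∀ t i, 0 ≤ ν t i) ∧ (∀ i, Monotone fun t => ν t i) ∧
        (∀ t, ∑ i, ν t i = (t:ℝ)) := by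
    intro ν
    constructor
    · exact mem_MT_props
    · intro hν
      obtain ⟨K, hK, hint⟩ := exists_kernel hd hT ν ν.continuous hν.1 hν.2.1 hν.2.2
      exact ⟨K, hK, hint⟩
  apply ArzelaAscoli.isCompact_of_equicontinuous
  · -- compactness of the image in the product topology
    set Pset : Set (Set.Icc (0:ℝ) T → Fin d → ℝ) :=
      {f | (∀ t i, 0 ≤ f t i) ∧ (∀ i, Monotone fun t => f t i) ∧
        (∀ t, ∑ i, f t i = (t:ℝ))} with hPset
    have himg : ContinuousMap.toFun '' MT d T = Pset := by
      ext f
      constructor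
      · rintro ⟨ν, hν, rfl⟩
        exact (hchar ν).mp hν
      · intro hf
        have hcont : Continuous f := by
          refine continuous_pi fun i => ?_
          have : LipschitzWith 1 fun t => f t i := by
            refine LipschitzWith.of_dist_le_mul fun x y => ?_
            rw [Real.dist_eq, Subtype.dist_eq, Real.dist_eq, NNReal.coe_one, one_mul]
            exact lip_of_props hf.2.1 hf.2.2 x y i
          exact this.continuous
        refine ⟨⟨f, hcont⟩, ?_, rfl⟩
        exact (hchar ⟨f, hcont⟩).mpr hf
    rw [himg]
    have hclosed : IsClosed Pset := by
      have hrw : Pset = (⋂ (t) (i), {f : Set.Icc (0:ℝ) T → Fin d → ℝ | 0 ≤ f t i}) ∩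
          ((⋂ (i) (x) (y) (_ : x ≤ y), {f : Set.Icc (0:ℝ) T → Fin d → ℝ | f x i ≤ f y i}) ∩
            (⋂ t, {f : Set.Icc (0:ℝ) T → Fin d → ℝ | ∑ i, f t i = (t:ℝ)})) := by
        ext f
        simp only [hPset, Set.mem_setOf_eq, Set.mem_inter_iff, Set.mem_iInter]
        exact ⟨fun h => ⟨h.1, fun i x y hxy => h.2.1 i hxy, h.2.2⟩,
          fun h => ⟨h.1, fun i x y hxy => h.2.1 i x y hxy, h.2.2⟩⟩
      rw [hrw]
      refine IsClosed.inter ?_ (IsClosed.inter ?_ ?_)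
      · exact isClosed_iInter fun t => isClosed_iInter fun i =>
          isClosed_le continuous_const ((continuous_apply i).comp (continuous_apply t))
      · exact isClosed_iInter fun i => isClosed_iInter fun x => isClosed_iInter fun y =>
          isClosed_iInter fun _ =>
            isClosed_le ((continuous_apply i).comp (continuous_apply x))
              ((continuous_apply i).comp (continuous_apply y))
      · exact isClosed_iInter fun t => isClosed_eq
          (continuous_finset_sum _ fun i _ => (continuous_apply i).comp (continuous_apply t))
          continuous_const
    have hsub : Pset ⊆ Set.univ.pi fun _ : Set.Icc (0:ℝ) T =>
        Set.univ.pi fun _ : Fin d => Set.Icc (0:ℝ) T := by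
      intro f hf
      rw [Set.mem_univ_pi]
      intro t
      rw [Set.mem_univ_pi]
      intro i
      refine ⟨hf.1 t i, ?_⟩
      calc f t i ≤ ∑ j, f t j :=
            Finset.single_le_sum (fun j _ => hf.1 t j) (Finset.mem_univ i)
        _ = (t:ℝ) := hf.2.2 t
        _ ≤ T := t.2.2
    exact IsCompact.of_isClosed_subset
      (isCompact_univ_pi fun _ => isCompact_univ_pi fun _ => isCompact_Icc) hclosed hsub
  · -- equicontinuity
    apply Metric.equicontinuous_of_continuity_modulus (fun r => r) (Filter.tendsto_id)
    intro x y ν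
    have hp := (hchar ν.1).mp ν.2
    refine (dist_pi_le_iff dist_nonneg).mpr fun i => ?_
    rw [Real.dist_eq]
    calc |ν.1 x i - ν.1 y i| ≤ |(x:ℝ) - (y:ℝ)| := lip_of_props hp.2.1 hp.2.2 x y i
      _ = dist x y := by rw [Subtype.dist_eq, Real.dist_eq]


end helpers
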